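/- Let A be a unital associative k-algebra with a double Poisson bracket {{-,-}}, and d a positive integer. Let O(A,d) be the commutative algebra generated by symbols a_{ij} (a ∈ A, 1 ≤ i,j ≤ d, linear in a) with relations (ab)_{ij} = Σ_r a_{ir} b_{rj} and 1_{ij} = δ_{ij}. Then the formula {a_{ij}, b_{kl}} := {{a,b}}'_{kj} {{a,b}}''_{il} (Sweedler notation {{a,b}} = {{a,b}}' ⊗ {{a,b}}'') defines a well-defined Poisson bracket on O(A,d), i.e. a skew-symmetric biderivation satisfying the Jacobi identity. -/

import Mathlib

open TensorProduct

set_option maxHeartbeats 1000000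
set_option synthInstance.maxHeartbeats 200000

noncomputable section

/-- The defining relations of the coordinate ring `O(A,d)` of the `d`-th representation
space, as a subset of the free commutative algebra on symbols `a_{ij}`:
linearity of `a ↦ a_{ij}`, the relations `(ab)_{ij} = Σ_r a_{ir} b_{rj}`,
and `1_{ij} = δ_{ij}`. -/
def repRelSet (k A : Type*) [Field k] [Ring A] [Algebra k A] (d : ℕ) :
    Set (MvPolynomial (A × Fin d × Fin d) k) :=
  (⋃ (a : A) (b : A) (i : Fin d) (j : Fin d),
    {MvPolynomial.X (a + b, i, j) - MvPolynomial.X (a, i, j) - MvPolynomial.X (b, i, j)}) ∪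
  (⋃ (c : k) (a : A) (i : Fin d) (j : Fin d),
    {MvPolynomial.X (c • a, i, j) - MvPolynomial.C c * MvPolynomial.X (a, i, j)}) ∪
  (⋃ (a : A) (b : A) (i : Fin d) (j : Fin d),
    {MvPolynomial.X (a * b, i, j)
      - ∑ r : Fin d, MvPolynomial.X (a, i, r) * MvPolynomial.X (b, r, j)}) ∪
  (⋃ (i : Fin d) (j : Fin d),
    {MvPolynomial.X ((1 : A), i, j) - if i = j then 1 else 0})

/-- The coordinate ring `O(A,d)` of the `d`-th representation space of `A`. -/
def RepCoordRing (k A : Type*) [Field k] [Ring A] [Algebra k A] (d : ℕ) :=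
  MvPolynomial (A × Fin d × Fin d) k ⧸ Ideal.span (repRelSet k A d)

instance (k A : Type*) [Field k] [Ring A] [Algebra k A] (d : ℕ) :
    CommRing (RepCoordRing k A d) :=
  Ideal.Quotient.commRing _

instance (k A : Type*) [Field k] [Ring A] [Algebra k A] (d : ℕ) :
    Algebra k (RepCoordRing k A d) :=
  Ideal.Quotient.algebra k

/-- The generator `a_{ij}` of `O(A,d)`, as a linear function of `a ∈ A`. -/
def repGen (k A : Type*) [Field k] [Ring A] [Algebra k A] (d : ℕ) (i j : Fin d) :
    A →ₗ[k] RepCoordRing k A d where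
  toFun a := Ideal.Quotient.mk (Ideal.span (repRelSet k A d)) (MvPolynomial.X (a, i, j))
  map_add' a b := by
    show Ideal.Quotient.mk (Ideal.span (repRelSet k A d)) (MvPolynomial.X (a + b, i, j)) =
      Ideal.Quotient.mk (Ideal.span (repRelSet k A d)) (MvPolynomial.X (a, i, j)) + Ideal.Quotient.mk (Ideal.span (repRelSet k A d)) (MvPolynomial.X (b, i, j))
    rw [← map_add (Ideal.Quotient.mk (Ideal.span (repRelSet k A d)))]
    refine (Ideal.Quotient.eq).2 (Ideal.subset_span ?_)
    simp only [repRelSet, Set.mem_union, Set.mem_iUnion, Set.mem_singleton_iff]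
    exact Or.inl (Or.inl (Or.inl ⟨a, b, i, j, by ring⟩))
  map_smul' c a := by
    dsimp only [RingHom.id_apply]
    rw [← Ideal.Quotient.mkₐ_eq_mk k (Ideal.span (repRelSet k A d))]
    show Ideal.Quotient.mkₐ k (Ideal.span (repRelSet k A d)) (MvPolynomial.X (c • a, i, j)) = c • Ideal.Quotient.mkₐ k (Ideal.span (repRelSet k A d)) (MvPolynomial.X (a, i, j))
    rw [← map_smul (Ideal.Quotient.mkₐ k (Ideal.span (repRelSet k A d))),
      Ideal.Quotient.mkₐ_eq_mk]
    refine (Ideal.Quotient.eq).2 (Ideal.subset_span ?_)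
    simp only [repRelSet, Set.mem_union, Set.mem_iUnion, Set.mem_singleton_iff,
      MvPolynomial.smul_eq_C_mul]
    exact Or.inl (Or.inl (Or.inr ⟨c, a, i, j, rfl⟩))

/-- The linear map `A ⊗ A → O(A,d)` sending `u ⊗ v` to `u_{pq} · v_{rs}`, used to express
the Sweedler components of a double bracket. -/
def repPair (k A : Type*) [Field k] [Ring A] [Algebra k A] (d : ℕ) (p q r s : Fin d) :
    A ⊗[k] A →ₗ[k] RepCoordRing k A d :=
  TensorProduct.lift (LinearMap.mk₂ k
    (fun u v => repGen k A d p q u * repGen k A d r s v)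
    (fun u u' v => by simp [map_add, add_mul])
    (fun c u v => by simp [map_smul, smul_mul_assoc])
    (fun u v v' => by simp [map_add, mul_add])
    (fun c u v => by simp [map_smul, mul_smul_comm]))

/-- The cyclic permutation `(123)` on a triple tensor product, `x ⊗ y ⊗ z ↦ z ⊗ x ⊗ y`. -/
def cyclicPerm (k V : Type*) [CommRing k] [AddCommGroup V] [Module k V] :
    V ⊗[k] (V ⊗[k] V) →ₗ[k] V ⊗[k] (V ⊗[k] V) :=
  (TensorProduct.comm k (V ⊗[k] V) V).toLinearMap ∘ₗ
    (TensorProduct.assoc k V V V).symm.toLinearMap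

/-- For a double bracket `D` and `a : A`, the map `{{a, -}}_L : A ⊗ A → A ⊗ A ⊗ A`. -/
def bracketLeft (k A : Type*) [CommRing k] [Ring A] [Algebra k A]
    (D : A →ₗ[k] A →ₗ[k] A ⊗[k] A) (a : A) :
    A ⊗[k] A →ₗ[k] A ⊗[k] (A ⊗[k] A) :=
  (TensorProduct.assoc k A A A).toLinearMap ∘ₗ LinearMap.rTensor A (D a)

/-! ### development -/

namespace VdB

variable {k A : Type*} [Field k] [Ring A] [Algebra k A] {d : ℕ}

variable (k A d) in
abbrev P := MvPolynomial (A × Fin d × Fin d) k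

variable (k A d) in
abbrev RI : Ideal (P k A d) := Ideal.span (repRelSet k A d)

instance : Algebra (P k A d) (RepCoordRing k A d) :=
  Ideal.Quotient.algebra _

instance : @Module k (RepCoordRing k A d) _ AddCommGroup.toAddCommMonoid := Algebra.toModule

instance : IsScalarTower k (P k A d) (RepCoordRing k A d) :=
  Ideal.Quotient.isScalarTower _ _ _

instance : SMulCommClass (RepCoordRing k A d) (P k A d) (RepCoordRing k A d) :=
  SMulCommClass.symm _ _ _

variable (k A d) in
def pi : P k A d →+* RepCoordRing k A d := Ideal.Quotient.mk (RI k A d)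

lemma repGen_apply (i j : Fin d) (a : A) :
    repGen k A d i j a = pi k A d (MvPolynomial.X (a, i, j)) := rfl

lemma smul_pi (p : P k A d) (r : RepCoordRing k A d) : p • r = pi k A d p * r := by
  rw [Algebra.smul_def]
  rfl

lemma repPair_tmul (p q r s : Fin d) (u v : A) :
    repPair k A d p q r s (u ⊗ₜ v) = repGen k A d p q u * repGen k A d r s v := rfl

lemma pi_rel {x y : P k A d} (h : x - y ∈ repRelSet k A d) : pi k A d x = pi k A d y :=
  Ideal.Quotient.eq.2 (Ideal.subset_span h)

lemma repGen_mul (i j : Fin d) (a b : A) :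
    repGen k A d i j (a * b) = ∑ r : Fin d, repGen k A d i r a * repGen k A d r j b := by
  have : pi k A d (MvPolynomial.X (a * b, i, j))
      = pi k A d (∑ r : Fin d, MvPolynomial.X (a, i, r) * MvPolynomial.X (b, r, j)) := by
    refine pi_rel ?_
    simp only [repRelSet, Set.mem_union, Set.mem_iUnion, Set.mem_singleton_iff]
    exact Or.inl (Or.inr ⟨a, b, i, j, rfl⟩)
  rw [repGen_apply, this, map_sum]
  rfl

lemma repGen_one (i j : Fin d) :
    repGen k A d i j (1 : A) = if i = j then 1 else 0 := by
  have : pi k A d (MvPolynomial.X ((1:A), i, j))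
      = pi k A d (if i = j then 1 else 0) := by
    refine pi_rel ?_
    simp only [repRelSet, Set.mem_union, Set.mem_iUnion, Set.mem_singleton_iff]
    exact Or.inr ⟨i, j, rfl⟩
  rw [repGen_apply, this]
  split
  · exact map_one _
  · exact map_zero _

lemma repPair_comm (p q r s : Fin d) (T : A ⊗[k] A) :
    repPair k A d p q r s (TensorProduct.comm k A A T) = repPair k A d r s p q T := by
  induction T with
  | zero => simp
  | tmul u v => simp [repPair_tmul, mul_comm]
  | add x y hx hy => simp [map_add, hx, hy]

end VdB

namespace VdB

variable {k A : Type*} [Field k] [Ring A] [Algebra k A] {d : ℕ}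

variable (k A d) in
/-- Triple contraction `u ⊗ v ⊗ w ↦ u_α v_β w_γ`. -/
def trip (α β γ : Fin d × Fin d) : A ⊗[k] (A ⊗[k] A) →ₗ[k] RepCoordRing k A d :=
  TensorProduct.lift (LinearMap.mk₂ k
    (fun u t => repGen k A d α.1 α.2 u * repPair k A d β.1 β.2 γ.1 γ.2 t)
    (fun u u' v => by simp [map_add, add_mul])
    (fun c u v => by simp [map_smul, smul_mul_assoc])
    (fun u v v' => by simp [map_add, mul_add])
    (fun c u v => by simp [map_smul, mul_smul_comm]))

lemma trip_tmul (α β γ : Fin d × Fin d) (u : A) (t : A ⊗[k] A) :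
    trip k A d α β γ (u ⊗ₜ t)
      = repGen k A d α.1 α.2 u * repPair k A d β.1 β.2 γ.1 γ.2 t := rfl

lemma trip_cyclic (α β γ : Fin d × Fin d) (t : A ⊗[k] (A ⊗[k] A)) :
    trip k A d α β γ (cyclicPerm k A t) = trip k A d β γ α t := by
  induction t with
  | zero => simp
  | add x y hx hy => simp [map_add, hx, hy]
  | tmul u s =>
    induction s with
    | zero => simp
    | add x y hx hy =>
      rw [tmul_add, map_add, map_add, map_add, hx, hy]
    | tmul x y =>
      simp only [cyclicPerm, LinearMap.coe_comp, Function.comp_apply,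
        LinearEquiv.coe_coe, assoc_symm_tmul, comm_tmul]
      simp only [trip_tmul, repPair_tmul]
      ring

lemma trip_assoc_tmul (α β γ : Fin d × Fin d) (S : A ⊗[k] A) (v : A) :
    trip k A d α β γ (TensorProduct.assoc k A A A (S ⊗ₜ v))
      = repPair k A d α.1 α.2 β.1 β.2 S * repGen k A d γ.1 γ.2 v := by
  induction S with
  | zero => simp
  | add x y hx hy =>
    rw [add_tmul, map_add, map_add, map_add, hx, hy, add_mul]
  | tmul x y =>
    simp only [assoc_tmul, trip_tmul, repPair_tmul]
    ring

lemma cyclicPerm_assoc_tmul (S : A ⊗[k] A) (y : A) :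
    cyclicPerm k A (TensorProduct.assoc k A A A (S ⊗ₜ y)) = y ⊗ₜ S := by
  induction S with
  | zero => simp
  | add u v hu hv => rw [add_tmul, map_add, map_add, hu, hv, tmul_add]
  | tmul u v =>
    simp [cyclicPerm, assoc_tmul]

lemma bracketLeft_tmul (D : A →ₗ[k] A →ₗ[k] A ⊗[k] A) (a x y : A) :
    bracketLeft k A D a (x ⊗ₜ y) = TensorProduct.assoc k A A A ((D a x) ⊗ₜ y) := rfl

/-- `(1 ⊗ D a)(comm t) = τ (bracketLeft a t)`. -/
lemma lTensor_comm_eq (D : A →ₗ[k] A →ₗ[k] A ⊗[k] A) (a : A) (t : A ⊗[k] A) :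
    LinearMap.lTensor A (D a) (TensorProduct.comm k A A t)
      = cyclicPerm k A (bracketLeft k A D a t) := by
  induction t with
  | zero => simp
  | add x y hx hy => simp [map_add, hx, hy]
  | tmul x y =>
    rw [comm_tmul, LinearMap.lTensor_tmul, bracketLeft_tmul, cyclicPerm_assoc_tmul]

/-- Key consequence of skew-symmetry: `(1 ⊗ D a)(D b c) = -τ(bracketLeft a (D c b))`. -/
lemma lTensor_D (D : A →ₗ[k] A →ₗ[k] A ⊗[k] A)
    (hskew : ∀ a b : A, D a b = - (TensorProduct.comm k A A) (D b a)) (a b c : A) :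
    LinearMap.lTensor A (D a) (D b c)
      = - cyclicPerm k A (bracketLeft k A D a (D c b)) := by
  rw [hskew b c, map_neg, lTensor_comm_eq]

lemma repPair_lTensor_mulRight (p q r s : Fin d) (b : A) (T : A ⊗[k] A) :
    repPair k A d p q r s (LinearMap.lTensor A (LinearMap.mulRight k b) T)
      = ∑ m : Fin d, repPair k A d p q r m T * repGen k A d m s b := by
  induction T with
  | zero => simp
  | add x y hx hy => simp [map_add, hx, hy, Finset.sum_add_distrib, add_mul]
  | tmul x y =>
    simp only [LinearMap.lTensor_tmul, repPair_tmul, LinearMap.mulRight_apply,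
      repGen_mul]
    refine (Finset.mul_sum _ _ _).trans ?_
    exact Finset.sum_congr rfl fun m _ => by ring

lemma repPair_rTensor_mulLeft (p q r s : Fin d) (a : A) (T : A ⊗[k] A) :
    repPair k A d p q r s (LinearMap.rTensor A (LinearMap.mulLeft k a) T)
      = ∑ m : Fin d, repGen k A d p m a * repPair k A d m q r s T := by
  induction T with
  | zero => simp
  | add x y hx hy => simp [map_add, hx, hy, Finset.sum_add_distrib, mul_add]
  | tmul x y =>
    simp only [LinearMap.rTensor_tmul, repPair_tmul, LinearMap.mulLeft_apply,
      repGen_mul]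
    refine (Finset.sum_mul _ _ _).trans ?_
    exact Finset.sum_congr rfl fun m _ => by ring

end VdB

namespace VdB

variable {k A : Type*} [Field k] [Ring A] [Algebra k A] {d : ℕ}
variable (D : A →ₗ[k] A →ₗ[k] A ⊗[k] A)

lemma D_one (hleib : ∀ a b c : A, D a (b * c)
      = LinearMap.lTensor A (LinearMap.mulRight k c) (D a b)
        + LinearMap.rTensor A (LinearMap.mulLeft k b) (D a c)) (a : A) :
    D a 1 = 0 := by
  have h := hleib a 1 1
  rw [mul_one] at h
  have h1 : LinearMap.mulRight k (1:A) = LinearMap.id := by ext x; simp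
  have h2 : LinearMap.mulLeft k (1:A) = LinearMap.id := by ext x; simp
  rw [h1, h2, LinearMap.lTensor_id, LinearMap.rTensor_id, LinearMap.id_apply] at h
  exact left_eq_add.mp h

variable (k A d) in
/-- value of the bracket on a pair of generators -/
def vgen (g h : A × Fin d × Fin d) : RepCoordRing k A d :=
  repPair k A d h.2.1 g.2.2 g.2.1 h.2.2 (D g.1 h.1)

variable (k A d) in
def Phi (g : A × Fin d × Fin d) : Derivation k (P k A d) (RepCoordRing k A d) :=
  MvPolynomial.mkDerivation k (vgen k A d D g)

lemma Phi_X (g h : A × Fin d × Fin d) : Phi k A d D g (MvPolynomial.X h) = vgen k A d D g h :=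
  MvPolynomial.mkDerivation_X _ _ _

variable (k A d) in
def Psi (y : P k A d) : Derivation k (P k A d) (RepCoordRing k A d) :=
  MvPolynomial.mkDerivation k (fun g => Phi k A d D g y)

lemma Psi_X (g : A × Fin d × Fin d) (y : P k A d) :
    Psi k A d D y (MvPolynomial.X g) = Phi k A d D g y :=
  MvPolynomial.mkDerivation_X _ _ _

variable (k A d) in
def B0 : P k A d →ₗ[k] P k A d →ₗ[k] RepCoordRing k A d :=
  LinearMap.mk₂ k (fun x y => Psi k A d D y x)
    (fun x x' y => (Psi k A d D y).map_add x x')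
    (fun c x y => (Psi k A d D y).map_smul c x)
    (fun x y y' => by
      have : Psi k A d D (y + y') = Psi k A d D y + Psi k A d D y' := by
        refine MvPolynomial.derivation_ext fun g => ?_
        show Psi k A d D (y + y') (MvPolynomial.X g) = Psi k A d D y (MvPolynomial.X g) + Psi k A d D y' (MvPolynomial.X g)
        rw [Psi_X, Psi_X, Psi_X]
        exact (Phi k A d D g).map_add y y'
      show Psi k A d D (y + y') x = Psi k A d D y x + Psi k A d D y' x
      rw [this]; rfl)
    (fun c x y => by
      have : Psi k A d D (c • y) = c • Psi k A d D y := by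
        refine MvPolynomial.derivation_ext fun g => ?_
        show Psi k A d D (c • y) (MvPolynomial.X g) = (c • Psi k A d D y) (MvPolynomial.X g)
        rw [Psi_X]
        show Phi k A d D g (c • y) = c • Psi k A d D y (MvPolynomial.X g)
        rw [Psi_X]
        exact (Phi k A d D g).map_smul c y
      show Psi k A d D (c • y) x = c • Psi k A d D y x
      rw [this]; rfl)

lemma B0_apply (x y : P k A d) : B0 k A d D x y = Psi k A d D y x := rfl

lemma B0_X_X (g h : A × Fin d × Fin d) :
    B0 k A d D (MvPolynomial.X g) (MvPolynomial.X h) = vgen k A d D g h := by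
  rw [B0_apply, Psi_X, Phi_X]

/-- Leibniz rule in the second slot. -/
lemma B0_leibniz2 (x y z : P k A d) :
    B0 k A d D x (y * z) = B0 k A d D x y * pi k A d z + pi k A d y * B0 k A d D x z := by
  have : Psi k A d D (y * z)
      = pi k A d z • Psi k A d D y + pi k A d y • Psi k A d D z := by
    refine MvPolynomial.derivation_ext fun g => ?_
    rw [Psi_X]
    have h := (Phi k A d D g).leibniz y z
    rw [h]
    show y • Phi k A d D g z + z • Phi k A d D g y
        = pi k A d z • Psi k A d D y (MvPolynomial.X g) + pi k A d y • Psi k A d D z (MvPolynomial.X g)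
    rw [Psi_X, Psi_X, smul_pi, smul_pi, smul_eq_mul, smul_eq_mul]
    ring
  rw [B0_apply, this]
  show pi k A d z • Psi k A d D y x + pi k A d y • Psi k A d D z x = _
  rw [smul_eq_mul, smul_eq_mul, B0_apply, B0_apply]
  ring

end VdB

namespace VdB

variable {k A : Type*} [Field k] [Ring A] [Algebra k A] {d : ℕ}
variable (D : A →ₗ[k] A →ₗ[k] A ⊗[k] A)
variable (hskew : ∀ a b : A, D a b = - (TensorProduct.comm k A A) (D b a))

include hskew in
lemma vgen_skew (g h : A × Fin d × Fin d) :
    vgen k A d D g h = - vgen k A d D h g := by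
  unfold vgen
  rw [hskew g.1 h.1, map_neg, repPair_comm]

include hskew in
lemma Phi_eq_neg_Psi_X (g : A × Fin d × Fin d) (y : P k A d) :
    Phi k A d D g y = - Psi k A d D (MvPolynomial.X g) y := by
  have : Phi k A d D g + Psi k A d D (MvPolynomial.X g) = 0 := by
    refine MvPolynomial.derivation_ext fun h => ?_
    show Phi k A d D g (MvPolynomial.X h) + Psi k A d D (MvPolynomial.X g) (MvPolynomial.X h) = 0
    rw [Phi_X, Psi_X, Phi_X, vgen_skew D hskew, neg_add_cancel]
  have h2 : Phi k A d D g y + Psi k A d D (MvPolynomial.X g) y = 0 :=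
    congrArg (fun δ => δ y) this
  exact eq_neg_of_add_eq_zero_left h2

include hskew in
lemma B0_skew (x y : P k A d) : B0 k A d D x y = - B0 k A d D y x := by
  -- fix y; as derivations in x
  have hone : B0 k A d D y 1 = 0 := by
    have h := B0_leibniz2 D y 1 1
    have hp : pi k A d (1 : P k A d) = 1 := map_one _
    rw [mul_one, hp, mul_one, one_mul] at h
    exact left_eq_add.mp h
  let Dy : Derivation k (P k A d) (RepCoordRing k A d) :=
    { toLinearMap := B0 k A d D y
      map_one_eq_zero' := hone
      leibniz' := fun a b => by
        have h := B0_leibniz2 D y a b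
        rw [h, smul_pi, smul_pi]
        ring }
  have key : Psi k A d D y + Dy = 0 := by
    refine MvPolynomial.derivation_ext fun g => ?_
    show Psi k A d D y (MvPolynomial.X g) + Dy (MvPolynomial.X g) = 0
    rw [Psi_X]
    show Phi k A d D g y + B0 k A d D y (MvPolynomial.X g) = 0
    rw [Phi_eq_neg_Psi_X D hskew]
    exact neg_add_cancel _
  show Psi k A d D y x = - B0 k A d D y x
  exact eq_neg_of_add_eq_zero_left (congrArg (fun δ => δ x) key)

end VdB

namespace VdB

variable {k A : Type*} [Field k] [Ring A] [Algebra k A] {d : ℕ}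
variable (D : A →ₗ[k] A →ₗ[k] A ⊗[k] A)
variable (hleib : ∀ a b c : A, D a (b * c)
      = LinearMap.lTensor A (LinearMap.mulRight k c) (D a b)
        + LinearMap.rTensor A (LinearMap.mulLeft k b) (D a c))

include hleib in
lemma Phi_rel (g : A × Fin d × Fin d) {r : P k A d} (hr : r ∈ repRelSet k A d) :
    Phi k A d D g r = 0 := by
  obtain ⟨u, s, t⟩ := g
  simp only [repRelSet, Set.mem_union, Set.mem_iUnion, Set.mem_singleton_iff] at hr
  rcases hr with (((⟨a, b, i, j, rfl⟩ | ⟨c, a, i, j, rfl⟩) | ⟨a, b, i, j, rfl⟩) | ⟨i, j, rfl⟩)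
  · -- additivity relation
    rw [map_sub, map_sub, Phi_X, Phi_X, Phi_X]
    show repPair k A d i t s j (D u (a + b)) - repPair k A d i t s j (D u a)
        - repPair k A d i t s j (D u b) = 0
    rw [← map_sub, ← map_sub, ← map_sub, ← map_sub,
      show a + b - a - b = (0:A) from by abel, map_zero, map_zero]
  · -- smul relation
    rw [map_sub, Phi_X, MvPolynomial.C_mul', Derivation.map_smul, Phi_X]
    show repPair k A d i t s j (D u (c • a)) - c • repPair k A d i t s j (D u a) = 0
    rw [map_smul (D u), map_smul]
    simp
  · -- product relation
    rw [map_sub, Phi_X, map_sum]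
    show repPair k A d i t s j (D u (a * b))
        - ∑ m : Fin d, Phi k A d (D) (u, s, t) (MvPolynomial.X (a, i, m) * MvPolynomial.X (b, m, j)) = 0
    have hterm : ∀ m : Fin d,
        Phi k A d (D) (u, s, t) (MvPolynomial.X (a, i, m) * MvPolynomial.X (b, m, j))
          = repGen k A d i m a * repPair k A d m t s j (D u b)
            + repGen k A d m j b * repPair k A d i t s m (D u a) := by
      intro m
      have h := (Phi k A d D (u, s, t)).leibniz (MvPolynomial.X (a, i, m)) (MvPolynomial.X (b, m, j))
      rw [h, Phi_X, Phi_X, smul_pi, smul_pi]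
      show pi k A d (MvPolynomial.X (a, i, m)) * repPair k A d m t s j (D u b)
          + pi k A d (MvPolynomial.X (b, m, j)) * repPair k A d i t s m (D u a) = _
      rw [← repGen_apply, ← repGen_apply]
    rw [Finset.sum_congr rfl (fun m _ => hterm m)]
    rw [hleib u a b, map_add, repPair_lTensor_mulRight, repPair_rTensor_mulLeft]
    rw [Finset.sum_add_distrib]
    rw [sub_eq_zero, add_comm]
    exact congrArg₂ (· + ·) rfl (Finset.sum_congr rfl fun m _ => mul_comm _ _)
  · -- unit relation
    rw [map_sub, Phi_X]
    show repPair k A d i t s j (D u 1) - Phi k A d (D) (u, s, t) (if i = j then 1 else 0) = 0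
    rw [D_one D hleib, map_zero]
    split
    · rw [Derivation.map_one_eq_zero]; simp
    · rw [map_zero]; simp

include hleib in
lemma Phi_ideal (g : A × Fin d × Fin d) {y : P k A d} (hy : y ∈ RI k A d) :
    Phi k A d D g y = 0 := by
  have : y ∈ RI k A d ∧ Phi k A d D g y = 0 := by
    refine Submodule.span_induction ?_ ?_ ?_ ?_ hy
    · intro r hr
      exact ⟨Ideal.subset_span hr, Phi_rel D hleib g hr⟩
    · exact ⟨Submodule.zero_mem _, map_zero _⟩
    · rintro a b _ _ ⟨ha, ha'⟩ ⟨hb, hb'⟩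
      exact ⟨Submodule.add_mem _ ha hb, by rw [map_add, ha', hb', add_zero]⟩
    · rintro c x _ ⟨hx, hx'⟩
      refine ⟨Submodule.smul_mem _ _ hx, ?_⟩
      have h := (Phi k A d D g).leibniz c x
      rw [smul_eq_mul, h, hx', smul_zero, zero_add, smul_pi]
      have : pi k A d x = 0 := (Ideal.Quotient.eq_zero_iff_mem).2 hx
      rw [this, zero_mul]
  exact this.2

include hleib in
lemma B0_right_ideal (x : P k A d) {y : P k A d} (hy : y ∈ RI k A d) :
    B0 k A d D x y = 0 := by
  have : Psi k A d D y = 0 := by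
    refine MvPolynomial.derivation_ext fun g => ?_
    show Psi k A d D y (MvPolynomial.X g) = 0
    rw [Psi_X, Phi_ideal D hleib g hy]
  show Psi k A d D y x = 0
  rw [this]; rfl

end VdB

namespace VdB

variable {k A : Type*} [Field k] [Ring A] [Algebra k A] {d : ℕ}
variable (D : A →ₗ[k] A →ₗ[k] A ⊗[k] A)
variable (hskew : ∀ a b : A, D a b = - (TensorProduct.comm k A A) (D b a))
variable (hleib : ∀ a b c : A, D a (b * c)
      = LinearMap.lTensor A (LinearMap.mulRight k c) (D a b)
        + LinearMap.rTensor A (LinearMap.mulLeft k b) (D a c))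

instance : AddCommGroup (P k A d →ₗ[k] RepCoordRing k A d) := LinearMap.addCommGroup

instance : AddCommGroup (RepCoordRing k A d →ₗ[k] RepCoordRing k A d) := LinearMap.addCommGroup

instance : @Module k (P k A d →ₗ[k] RepCoordRing k A d) _ AddCommGroup.toAddCommMonoid :=
  LinearMap.module

instance : @Module k (RepCoordRing k A d →ₗ[k] RepCoordRing k A d) _ AddCommGroup.toAddCommMonoid :=
  LinearMap.module

variable (k A d) in
def qe : (P k A d ⧸ (RI k A d).restrictScalars k) ≃ₗ[k] RepCoordRing k A d :=
  Submodule.Quotient.restrictScalarsEquiv k (RI k A d)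

include hskew hleib in
lemma B0_left_ideal {x : P k A d} (hx : x ∈ RI k A d) (y : P k A d) :
    B0 k A d D x y = 0 := by
  rw [B0_skew D hskew, B0_right_ideal D hleib y hx, neg_zero]

variable (k A d) in
def B1 (hskew : ∀ a b : A, D a b = - (TensorProduct.comm k A A) (D b a))
    (hleib : ∀ a b c : A, D a (b * c)
      = LinearMap.lTensor A (LinearMap.mulRight k c) (D a b)
        + LinearMap.rTensor A (LinearMap.mulLeft k b) (D a c)) :
    RepCoordRing k A d →ₗ[k] P k A d →ₗ[k] RepCoordRing k A d :=
  (Submodule.liftQ ((RI k A d).restrictScalars k) (B0 k A d D)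
    (fun x hx => LinearMap.ext fun y =>
      B0_left_ideal D hskew hleib hx y)) ∘ₗ (qe k A d).symm.toLinearMap

lemma B1_mk (x : P k A d) : B1 k A d D hskew hleib (pi k A d x) = B0 k A d D x := rfl

variable (k A d) in
def Bbar (hskew : ∀ a b : A, D a b = - (TensorProduct.comm k A A) (D b a))
    (hleib : ∀ a b c : A, D a (b * c)
      = LinearMap.lTensor A (LinearMap.mulRight k c) (D a b)
        + LinearMap.rTensor A (LinearMap.mulLeft k b) (D a c)) :
    RepCoordRing k A d →ₗ[k] RepCoordRing k A d →ₗ[k] RepCoordRing k A d :=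
  ((Submodule.liftQ ((RI k A d).restrictScalars k) (B1 k A d D hskew hleib).flip
    (fun y hy => LinearMap.ext fun ξ => by
      obtain ⟨x, rfl⟩ := Ideal.Quotient.mk_surjective (I := RI k A d) ξ
      show B1 k A d D hskew hleib (pi k A d x) y = 0
      rw [B1_mk]
      exact B0_right_ideal D hleib x hy)) ∘ₗ (qe k A d).symm.toLinearMap).flip

lemma Bbar_mk (x y : P k A d) :
    Bbar k A d D hskew hleib (pi k A d x) (pi k A d y) = B0 k A d D x y := rfl

end VdB

namespace VdB

variable {k A : Type*} [Field k] [Ring A] [Algebra k A] {d : ℕ}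
variable (D : A →ₗ[k] A →ₗ[k] A ⊗[k] A)
variable (hskew : ∀ a b : A, D a b = - (TensorProduct.comm k A A) (D b a))
variable (hleib : ∀ a b c : A, D a (b * c)
      = LinearMap.lTensor A (LinearMap.mulRight k c) (D a b)
        + LinearMap.rTensor A (LinearMap.mulLeft k b) (D a c))

lemma pi_surj : Function.Surjective (pi k A d) := Ideal.Quotient.mk_surjective

include hskew hleib

lemma Bbar_skew (x y : RepCoordRing k A d) :
    Bbar k A d D hskew hleib x y = - Bbar k A d D hskew hleib y x := by
  obtain ⟨x, rfl⟩ := pi_surj x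
  obtain ⟨y, rfl⟩ := pi_surj y
  rw [Bbar_mk, Bbar_mk, B0_skew D hskew]

lemma Bbar_leibniz2 (x y z : RepCoordRing k A d) :
    Bbar k A d D hskew hleib x (y * z)
      = Bbar k A d D hskew hleib x y * z + y * Bbar k A d D hskew hleib x z := by
  obtain ⟨x, rfl⟩ := pi_surj x
  obtain ⟨y, rfl⟩ := pi_surj y
  obtain ⟨z, rfl⟩ := pi_surj z
  have : pi k A d y * pi k A d z = pi k A d (y * z) := (map_mul _ _ _).symm
  rw [this, Bbar_mk, Bbar_mk, Bbar_mk, B0_leibniz2]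

lemma Bbar_leibniz1 (x y z : RepCoordRing k A d) :
    Bbar k A d D hskew hleib (x * y) z
      = Bbar k A d D hskew hleib x z * y + x * Bbar k A d D hskew hleib y z := by
  rw [Bbar_skew D hskew hleib, Bbar_leibniz2 D hskew hleib,
    Bbar_skew D hskew hleib z x, Bbar_skew D hskew hleib z y]
  ring

lemma Bbar_gen (a b : A) (i j p q : Fin d) :
    Bbar k A d D hskew hleib (repGen k A d i j a) (repGen k A d p q b)
      = repPair k A d p j i q (D a b) := by
  rw [repGen_apply, repGen_apply, Bbar_mk, B0_X_X]
  rfl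

/-- Key expansion: bracket of a generator with a contracted tensor. -/
lemma Bbar_repPair (a : A) (i j p q r s : Fin d) (T : A ⊗[k] A) :
    Bbar k A d D hskew hleib (repGen k A d i j a) (repPair k A d p q r s T)
      = trip k A d (p, j) (i, q) (r, s) (bracketLeft k A D a T)
        + trip k A d (p, q) (r, j) (i, s) (LinearMap.lTensor A (D a) T) := by
  induction T with
  | zero => simp
  | add x y hx hy => simp only [map_add, hx, hy]; ring
  | tmul u v =>
    rw [repPair_tmul, Bbar_leibniz2 D hskew hleib, Bbar_gen D hskew hleib,
      Bbar_gen D hskew hleib, bracketLeft_tmul, trip_assoc_tmul,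
      LinearMap.lTensor_tmul, trip_tmul]

end VdB

namespace VdB

variable {k A : Type*} [Field k] [Ring A] [Algebra k A] {d : ℕ}
variable (D : A →ₗ[k] A →ₗ[k] A ⊗[k] A)
variable (hskew : ∀ a b : A, D a b = - (TensorProduct.comm k A A) (D b a))
variable (hleib : ∀ a b c : A, D a (b * c)
      = LinearMap.lTensor A (LinearMap.mulRight k c) (D a b)
        + LinearMap.rTensor A (LinearMap.mulLeft k b) (D a c))

variable (k A d) in
def Jac (hskew : ∀ a b : A, D a b = - (TensorProduct.comm k A A) (D b a))
    (hleib : ∀ a b c : A, D a (b * c)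
      = LinearMap.lTensor A (LinearMap.mulRight k c) (D a b)
        + LinearMap.rTensor A (LinearMap.mulLeft k b) (D a c))
    (x y z : RepCoordRing k A d) : RepCoordRing k A d :=
  Bbar k A d D hskew hleib x (Bbar k A d D hskew hleib y z)
    + Bbar k A d D hskew hleib y (Bbar k A d D hskew hleib z x)
    + Bbar k A d D hskew hleib z (Bbar k A d D hskew hleib x y)

include hskew hleib

lemma Jac_cyclic (x y z : RepCoordRing k A d) :
    Jac k A d D hskew hleib x y z = Jac k A d D hskew hleib y z x := by
  unfold Jac; ring

lemma Jac_mul1 (u v y z : RepCoordRing k A d) :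
    Jac k A d D hskew hleib (u * v) y z
      = u * Jac k A d D hskew hleib v y z + v * Jac k A d D hskew hleib u y z := by
  have s1 : Bbar k A d D hskew hleib u y = - Bbar k A d D hskew hleib y u :=
    Bbar_skew D hskew hleib u y
  have s2 : Bbar k A d D hskew hleib v y = - Bbar k A d D hskew hleib y v :=
    Bbar_skew D hskew hleib v y
  simp only [Jac, Bbar_leibniz1 D hskew hleib, Bbar_leibniz2 D hskew hleib, map_add]
  linear_combination Bbar k A d D hskew hleib z v * s1 + Bbar k A d D hskew hleib z u * s2

lemma Jac_one (y z : RepCoordRing k A d) :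
    Jac k A d D hskew hleib 1 y z = 0 := by
  have h := Jac_mul1 D hskew hleib 1 1 y z
  rw [mul_one, one_mul] at h
  exact left_eq_add.mp h

lemma Jac_add1 (x x' y z : RepCoordRing k A d) :
    Jac k A d D hskew hleib (x + x') y z
      = Jac k A d D hskew hleib x y z + Jac k A d D hskew hleib x' y z := by
  simp only [Jac, map_add, LinearMap.add_apply]
  ring

lemma Jac_smul1 (c : k) (x y z : RepCoordRing k A d) :
    Jac k A d D hskew hleib (c • x) y z = c • Jac k A d D hskew hleib x y z := by
  simp only [Jac, map_smul, LinearMap.smul_apply, smul_add]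

end VdB

namespace VdB

variable {k A : Type*} [Field k] [Ring A] [Algebra k A] {d : ℕ}
variable (D : A →ₗ[k] A →ₗ[k] A ⊗[k] A)
variable (hskew : ∀ a b : A, D a b = - (TensorProduct.comm k A A) (D b a))
variable (hleib : ∀ a b c : A, D a (b * c)
      = LinearMap.lTensor A (LinearMap.mulRight k c) (D a b)
        + LinearMap.rTensor A (LinearMap.mulLeft k b) (D a c))
variable (hjac : ∀ a b c : A, bracketLeft k A D a (D b c)
        + cyclicPerm k A (bracketLeft k A D b (D c a))
        + cyclicPerm k A (cyclicPerm k A (bracketLeft k A D c (D a b))) = 0)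

include hskew hleib hjac in
lemma Jac_gen (a b c : A) (i j kk l p q : Fin d) :
    Jac k A d D hskew hleib (repGen k A d i j a) (repGen k A d kk l b) (repGen k A d p q c)
      = 0 := by
  unfold Jac
  rw [Bbar_gen D hskew hleib b c, Bbar_gen D hskew hleib c a, Bbar_gen D hskew hleib a b,
    Bbar_repPair D hskew hleib, Bbar_repPair D hskew hleib, Bbar_repPair D hskew hleib,
    lTensor_D D hskew a b c, lTensor_D D hskew b c a, lTensor_D D hskew c a b]
  simp only [map_neg, trip_cyclic]
  have h1 := congrArg (trip k A d (p, j) (i, l) (kk, q)) (hjac a b c)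
  have h2 := congrArg (trip k A d (kk, j) (i, q) (p, l)) (hjac a c b)
  simp only [map_add, map_zero, trip_cyclic] at h1 h2
  linear_combination h1 - h2

end VdB

namespace VdB

variable {k A : Type*} [Field k] [Ring A] [Algebra k A] {d : ℕ}
variable (D : A →ₗ[k] A →ₗ[k] A ⊗[k] A)
variable (hskew : ∀ a b : A, D a b = - (TensorProduct.comm k A A) (D b a))
variable (hleib : ∀ a b c : A, D a (b * c)
      = LinearMap.lTensor A (LinearMap.mulRight k c) (D a b)
        + LinearMap.rTensor A (LinearMap.mulLeft k b) (D a c))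
variable (hjac : ∀ a b c : A, bracketLeft k A D a (D b c)
        + cyclicPerm k A (bracketLeft k A D b (D c a))
        + cyclicPerm k A (cyclicPerm k A (bracketLeft k A D c (D a b))) = 0)

include hskew hleib

lemma pi_X (g : A × Fin d × Fin d) :
    pi k A d (MvPolynomial.X g) = repGen k A d g.2.1 g.2.2 g.1 := rfl

lemma pi_C (cc : k) : pi k A d (MvPolynomial.C cc) = cc • (1 : RepCoordRing k A d) := by
  rw [Algebra.smul_def, mul_one]
  rfl

include hjac in
lemma Jac_gen3 (g h : A × Fin d × Fin d) (z : RepCoordRing k A d) :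
    Jac k A d D hskew hleib (pi k A d (MvPolynomial.X g)) (pi k A d (MvPolynomial.X h)) z = 0 := by
  obtain ⟨w, rfl⟩ := pi_surj z
  induction w using MvPolynomial.induction_on with
  | C cc =>
    rw [pi_C D hskew hleib, Jac_cyclic D hskew hleib, Jac_cyclic D hskew hleib,
      Jac_smul1 D hskew hleib, Jac_one D hskew hleib, smul_zero]
  | add u v hu hv =>
    rw [map_add, Jac_cyclic D hskew hleib, Jac_cyclic D hskew hleib, Jac_add1 D hskew hleib,
      ← Jac_cyclic D hskew hleib, ← Jac_cyclic D hskew hleib, hu,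
      ← Jac_cyclic D hskew hleib, ← Jac_cyclic D hskew hleib, hv, add_zero]
  | mul_X u n hu =>
    have e1 : Jac k A d D hskew hleib (pi k A d (MvPolynomial.X n)) (pi k A d (MvPolynomial.X g))
        (pi k A d (MvPolynomial.X h)) = 0 := by
      rw [Jac_cyclic D hskew hleib]
      exact Jac_gen D hskew hleib hjac g.1 h.1 n.1 g.2.1 g.2.2 h.2.1 h.2.2 n.2.1 n.2.2
    have e2 : Jac k A d D hskew hleib (pi k A d u) (pi k A d (MvPolynomial.X g))
        (pi k A d (MvPolynomial.X h)) = 0 := by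
      rw [Jac_cyclic D hskew hleib]
      exact hu
    rw [map_mul, Jac_cyclic D hskew hleib, Jac_cyclic D hskew hleib, Jac_mul1 D hskew hleib,
      e1, e2, mul_zero, mul_zero, add_zero]

include hjac in
lemma Jac_gen2 (g : A × Fin d × Fin d) (y z : RepCoordRing k A d) :
    Jac k A d D hskew hleib (pi k A d (MvPolynomial.X g)) y z = 0 := by
  obtain ⟨w, rfl⟩ := pi_surj y
  induction w using MvPolynomial.induction_on with
  | C cc =>
    rw [pi_C D hskew hleib, Jac_cyclic D hskew hleib, Jac_smul1 D hskew hleib,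
      Jac_one D hskew hleib, smul_zero]
  | add u v hu hv =>
    rw [map_add, Jac_cyclic D hskew hleib, Jac_add1 D hskew hleib,
      ← Jac_cyclic D hskew hleib, hu, ← Jac_cyclic D hskew hleib, hv, add_zero]
  | mul_X u n hu =>
    have e1 : Jac k A d D hskew hleib (pi k A d (MvPolynomial.X n)) z
        (pi k A d (MvPolynomial.X g)) = 0 := by
      rw [Jac_cyclic D hskew hleib, Jac_cyclic D hskew hleib]
      exact Jac_gen3 D hskew hleib hjac g n z
    have e2 : Jac k A d D hskew hleib (pi k A d u) z (pi k A d (MvPolynomial.X g)) = 0 := by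
      rw [Jac_cyclic D hskew hleib, Jac_cyclic D hskew hleib]
      exact hu
    rw [map_mul, Jac_cyclic D hskew hleib, Jac_mul1 D hskew hleib, e1, e2, mul_zero, mul_zero,
      add_zero]

include hjac in
lemma Jac_zero (x y z : RepCoordRing k A d) :
    Jac k A d D hskew hleib x y z = 0 := by
  obtain ⟨w, rfl⟩ := pi_surj x
  induction w using MvPolynomial.induction_on with
  | C cc =>
    rw [pi_C D hskew hleib, Jac_smul1 D hskew hleib, Jac_one D hskew hleib, smul_zero]
  | add u v hu hv =>
    rw [map_add, Jac_add1 D hskew hleib, hu, hv, add_zero]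
  | mul_X u n hu =>
    rw [map_mul, Jac_mul1 D hskew hleib, hu, Jac_gen2 D hskew hleib hjac, mul_zero, mul_zero,
      add_zero]

end VdB


/-- Van den Bergh: a double Poisson bracket `{{-,-}}` on `A` induces a
Poisson bracket on `O(A,d)` via `{a_{ij}, b_{kl}} = {{a,b}}'_{kj} {{a,b}}''_{il}`. -/
theorem van_den_bergh_poisson_bracket
    (k A : Type*) [Field k] [CharZero k] [Ring A] [Algebra k A] (d : ℕ)
    (D : A →ₗ[k] A →ₗ[k] A ⊗[k] A)
    (hskew : ∀ a b : A, D a b = - (TensorProduct.comm k A A) (D b a))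
    (hleib : ∀ a b c : A, D a (b * c)
      = LinearMap.lTensor A (LinearMap.mulRight k c) (D a b)
        + LinearMap.rTensor A (LinearMap.mulLeft k b) (D a c))
    (hjac : ∀ a b c : A, bracketLeft k A D a (D b c)
        + cyclicPerm k A (bracketLeft k A D b (D c a))
        + cyclicPerm k A (cyclicPerm k A (bracketLeft k A D c (D a b))) = 0) :
    ∃ B : RepCoordRing k A d →ₗ[k] RepCoordRing k A d →ₗ[k] RepCoordRing k A d,
      (∀ x y, B x y = - B y x) ∧
      (∀ x y z, B x (y * z) = B x y * z + y * B x z) ∧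
      (∀ x y z, B (x * y) z = B x z * y + x * B y z) ∧
      (∀ x y z, B x (B y z) + B y (B z x) + B z (B x y) = 0) ∧
      (∀ (a b : A) (i j p q : Fin d),
        B (repGen k A d i j a) (repGen k A d p q b) = repPair k A d p j i q (D a b)) := by
  refine ⟨VdB.Bbar k A d D hskew hleib, ?_, ?_, ?_, ?_, ?_⟩
  · exact VdB.Bbar_skew D hskew hleib
  · exact VdB.Bbar_leibniz2 D hskew hleib
  · exact VdB.Bbar_leibniz1 D hskew hleib
  · exact fun x y z => VdB.Jac_zero D hskew hleib hjac x y z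
  · exact fun a b i j p q => VdB.Bbar_gen D hskew hleib a b i j p q

end
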